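/- Fix \alpha \in (0,1] and a real t with t > \alpha. Let m(n) be a sequence of natural numbers such that m(n) - \alpha n is bounded. Then (m(n)! / (nt)^{m(n)}) \cdot \sum_{j=0}^{m(n)} (nt)^j/j! \to t/(t - \alpha) as n \to \infty. -/

import Mathlib

open Filter

/-- For `α ∈ (0,1]`, `t > α`, and a sequence `m(n)` with `m(n) - α n` bounded, we have
`(m(n)!/(nt)^{m(n)}) ∑_{j=0}^{m(n)} (nt)^j/j! → t/(t-α)` as `n → ∞`. -/
theorem weyl_incGamma_above (α t : ℝ) (hα0 : 0 < α) (hα1 : α ≤ 1) (htα : α < t)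
    (m : ℕ → ℕ) (C : ℝ) (hm : ∀ n : ℕ, |(m n : ℝ) - α * n| ≤ C) :
    Tendsto
      (fun n : ℕ =>
        ((Nat.factorial (m n) : ℝ) / ((n : ℝ) * t) ^ (m n)) *
          ∑ j ∈ Finset.range (m n + 1), ((n : ℝ) * t) ^ j / (Nat.factorial j))
      atTop (nhds (t / (t - α))) := by
  have ht0 : 0 < t := hα0.trans htα
  set r : ℝ := α / t with hr_def
  have hr0 : 0 ≤ r := le_of_lt (div_pos hα0 ht0)
  have hr1 : r < 1 := (div_lt_one ht0).mpr htα
  set q : ℝ := (α + t) / (2 * t) with hq_def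
  have hq1 : q < 1 := by rw [hq_def, div_lt_one (by linarith)]; linarith
  have hq0 : 0 < q := div_pos (by linarith) (by linarith)
  set f : ℕ → ℕ → ℝ := fun n k => ((m n).descFactorial k : ℝ) / ((n : ℝ) * t) ^ k with hf
  -- m n / n → α
  have hmn : Tendsto (fun n : ℕ => (m n : ℝ) / n) atTop (nhds α) := by
    have h0 : Tendsto (fun n : ℕ => (m n : ℝ) / n - α) atTop (nhds 0) := by
      have hC : Tendsto (fun n : ℕ => C / n) atTop (nhds 0) :=
        tendsto_const_nhds.div_atTop tendsto_natCast_atTop_atTop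
      apply squeeze_zero_norm' ?_ hC
      filter_upwards [eventually_ge_atTop 1] with n hn
      have hn0 : (0:ℝ) < n := by exact_mod_cast hn
      have h1 : (m n : ℝ)/n - α = ((m n : ℝ) - α * n)/n := by field_simp
      rw [Real.norm_eq_abs, h1, abs_div, abs_of_pos hn0]
      gcongr
      exact hm n
    have := h0.add (tendsto_const_nhds (x := α))
    simpa using this
  -- m n → ∞
  have hm_top : Tendsto m atTop atTop := by
    have : Tendsto (fun n : ℕ => (m n : ℝ)) atTop atTop := by
      apply tendsto_atTop_mono' _ _ (tendsto_atTop_add_const_right atTop (-C)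
        (tendsto_natCast_atTop_atTop.const_mul_atTop hα0))
      filter_upwards with n
      have := (abs_le.mp (hm n)).1
      linarith
    exact tendsto_natCast_atTop_iff.mp this
  -- pointwise limits
  have hpt : ∀ k : ℕ, Tendsto (fun n => f n k) atTop (nhds (r ^ k)) := by
    intro k
    have hfac : ∀ i : ℕ, Tendsto (fun n : ℕ => ((m n : ℝ) - i) / (n * t)) atTop (nhds r) := by
      intro i
      have h1 : Tendsto (fun n : ℕ => (m n : ℝ) / n - (i : ℝ) / n) atTop (nhds α) := by
        simpa using hmn.sub (tendsto_const_nhds.div_atTop tendsto_natCast_atTop_atTop)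
      have h2 := h1.div_const t
      apply h2.congr'
      filter_upwards [eventually_ge_atTop 1] with n hn
      have hn0 : (n:ℝ) ≠ 0 := by positivity
      field_simp
    have hprod : Tendsto (fun n : ℕ => ∏ i ∈ Finset.range k, ((m n : ℝ) - i) / (n * t))
        atTop (nhds (r ^ k)) := by
      have := tendsto_finset_prod (Finset.range k)
        (fun i _ => hfac i)
      simpa using this
    apply hprod.congr'
    filter_upwards [hm_top.eventually_ge_atTop k] with n hn
    rw [hf]
    simp only
    have hck : ((n:ℝ) * t) ^ k = ∏ _i ∈ Finset.range k, ((n:ℝ) * t) := by simp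
    rw [Nat.descFactorial_eq_prod_range, Nat.cast_prod, hck, ← Finset.prod_div_distrib]
    apply Finset.prod_congr rfl
    intro i hi
    congr 1
    have : i ≤ m n := le_trans (le_of_lt (Finset.mem_range.mp hi)) hn
    push_cast [this]
    ring
  -- bound
  have hbound : ∀ᶠ n in atTop, ∀ k, ‖f n k‖ ≤ q ^ k := by
    have hev : ∀ᶠ n : ℕ in atTop, (1:ℝ) ≤ n ∧ C / n ≤ (t - α) / 2 := by
      filter_upwards [tendsto_natCast_atTop_atTop.eventually_ge_atTop (1:ℝ),
        (tendsto_const_nhds.div_atTop (tendsto_natCast_atTop_atTop (R := ℝ))).eventually_le_const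
          (show (0:ℝ) < (t - α)/2 by linarith)] with n h1 h2
      exact ⟨h1, h2⟩
    filter_upwards [hev] with n hn k
    obtain ⟨hn1, hnC⟩ := hn
    have hn0 : (0:ℝ) < n := by linarith
    have hx : (0:ℝ) < n * t := by positivity
    have hkey : (m n : ℝ) / (n * t) ≤ q := by
      have h1 : (m n : ℝ) ≤ α * n + C := by have := (abs_le.mp (hm n)).2; linarith
      rw [div_le_iff₀ hx, hq_def]
      have h2 : C ≤ (t - α)/2 * n := by
        rw [div_le_iff₀ hn0] at hnC; linarith
      have : (α + t) / (2 * t) * (n * t) = (α + t) * n / 2 := by field_simp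
      rw [this]
      rw [le_div_iff₀ (by norm_num : (0:ℝ) < 2)]
      nlinarith
    rw [hf]
    simp only [Nat.descFactorial_eq_prod_range, Nat.cast_prod]
    rw [Real.norm_eq_abs, abs_div, abs_of_pos (pow_pos hx k), abs_of_nonneg
      (Finset.prod_nonneg fun i _ => by positivity)]
    have hck : ((n:ℝ) * t) ^ k = ∏ _i ∈ Finset.range k, ((n:ℝ) * t) := by simp
    rw [hck, ← Finset.prod_div_distrib]
    calc ∏ i ∈ Finset.range k, ((m n - i : ℕ) : ℝ) / (n * t)
        ≤ ∏ _i ∈ Finset.range k, q := by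
          apply Finset.prod_le_prod
          · intro i _; positivity
          · intro i _
            refine le_trans ?_ hkey
            have hcast : ((m n - i : ℕ):ℝ) ≤ (m n : ℝ) := by
              exact_mod_cast Nat.sub_le (m n) i
            exact div_le_div_of_nonneg_right hcast (le_of_lt hx)
      _ = q ^ k := by simp
  -- the limit of the tsum
  have hsum : Summable (fun k : ℕ => q ^ k) := summable_geometric_of_lt_one (le_of_lt hq0) hq1
  have htsum : Tendsto (fun n => ∑' k, f n k) atTop (nhds (∑' k, r ^ k)) :=
    tendsto_tsum_of_dominated_convergence hsum hpt hbound
  have hgeo : (∑' k : ℕ, r ^ k) = t / (t - α) := by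
    rw [tsum_geometric_of_lt_one hr0 hr1, hr_def]
    have h1 : 1 - α / t = (t - α) / t := by field_simp
    rw [h1, inv_div]
  rw [hgeo] at htsum
  apply htsum.congr'
  filter_upwards [eventually_ge_atTop 1] with n hn
  have hn0 : (0:ℝ) < n := by exact_mod_cast hn
  have hx : (0:ℝ) < n * t := by positivity
  -- tsum is a finite sum
  have hfin : (∑' k, f n k) = ∑ k ∈ Finset.range (m n + 1), f n k := by
    apply tsum_eq_sum
    intro k hk
    have : m n < k := by simpa [Nat.lt_succ_iff] using Finset.mem_range.not.mp hk
    rw [hf]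
    simp [Nat.descFactorial_eq_zero_iff_lt.mpr this]
  rw [hfin]
  rw [Finset.mul_sum, ← Finset.sum_range_reflect]
  apply Finset.sum_congr rfl
  intro k hk
  have hkm : k ≤ m n := by simpa [Nat.lt_succ_iff] using Finset.mem_range.mp hk
  have h1 : m n + 1 - 1 - k = m n - k := by omega
  rw [h1, hf]
  simp only
  have hfacts : ((m n).factorial : ℝ) = (k.factorial : ℝ) * ((m n).descFactorial (m n - k) : ℝ) := by
    have h2 : m n - (m n - k) = k := by omega
    have := Nat.factorial_mul_descFactorial (Nat.sub_le (m n) k)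
    rw [h2] at this
    exact_mod_cast this.symm
  have hpow : ((n:ℝ) * t) ^ (m n) = ((n:ℝ) * t) ^ (m n - k) * ((n:ℝ) * t) ^ k := by
    rw [← pow_add]; congr 1; omega
  have hf1 : (k.factorial : ℝ) ≠ 0 := by positivity
  have hx1 : ((n:ℝ) * t) ^ (m n - k) ≠ 0 := by positivity
  have hx2 : ((n:ℝ) * t) ^ k ≠ 0 := by positivity
  rw [div_mul_div_comm, div_eq_div_iff (by positivity) (by positivity), hfacts, hpow]
  ring
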